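/- Let A be a semisimple complex unital Banach algebra and let a, b ∈ A satisfy r(a·x) ≤ r(b·x) for all x ∈ A. If b is invertible, then there exists u in the center Z(A) of A such that r(u) ≤ 1 and a = u·b. -/

import Mathlib

set_option linter.unusedSectionVars false
set_option maxHeartbeats 1000000

open scoped ENNReal NNReal
open NormedSpace

namespace SpectralCenterAux

variable {A : Type*} [NormedRing A] [NormedAlgebra ℂ A] [CompleteSpace A] [NormOneClass A]

lemma my_spectrum_conj (s : Aˣ) (t : A) :
    spectrum ℂ ((↑s⁻¹ : A) * t * (s : A)) = spectrum ℂ t := by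
  ext μ
  simp only [spectrum.mem_iff]
  have key : algebraMap ℂ A μ - (↑s⁻¹ : A) * t * (s : A)
      = (↑s⁻¹ : A) * (algebraMap ℂ A μ - t) * (s : A) := by
    rw [mul_sub, sub_mul]
    congr 1
    rw [← Algebra.commutes μ (↑s⁻¹ : A)]
    rw [mul_assoc]
    simp [Algebra.commutes]
  rw [key]
  constructor
  · intro hnu hu
    exact hnu (by
      have := (s⁻¹.isUnit.mul hu).mul s.isUnit
      simpa [mul_assoc] using this)
  · intro hnu hu
    apply hnu
    have := (s.isUnit.mul hu).mul s⁻¹.isUnit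
    have e : (s : A) * ((↑s⁻¹ : A) * (algebraMap ℂ A μ - t) * (s : A)) * (↑s⁻¹ : A)
        = algebraMap ℂ A μ - t := by
      calc (s : A) * ((↑s⁻¹ : A) * (algebraMap ℂ A μ - t) * (s : A)) * (↑s⁻¹ : A)
          = ((s : A) * (↑s⁻¹ : A)) * (algebraMap ℂ A μ - t) * ((s : A) * (↑s⁻¹ : A)) := by
            simp only [mul_assoc]
        _ = algebraMap ℂ A μ - t := by simp
    rwa [e] at this

lemma my_spectralRadius_conj (s : Aˣ) (t : A) :
    spectralRadius ℂ ((↑s⁻¹ : A) * t * (s : A)) = spectralRadius ℂ t := by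
  unfold spectralRadius
  rw [my_spectrum_conj]

lemma my_le_spectralRadius {μ : ℂ} {t : A} (h : μ ∈ spectrum ℂ t) :
    (‖μ‖₊ : ℝ≥0∞) ≤ spectralRadius ℂ t := le_iSup₂ (f := fun k (_ : k ∈ spectrum ℂ t) => (‖k‖₊ : ℝ≥0∞)) μ h

lemma my_spectralRadius_one_le : spectralRadius ℂ (1 : A) ≤ 1 := by
  simpa using spectrum.spectralRadius_le_nnnorm (𝕜 := ℂ) (1 : A)

lemma my_leftInv_open : IsOpen {x : A | ∃ t : A, t * x = 1} := by
  rw [Metric.isOpen_iff]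
  rintro x ⟨t, ht⟩
  refine ⟨(‖t‖ + 1)⁻¹, by positivity, ?_⟩
  intro y hy
  rw [Metric.mem_ball, dist_eq_norm] at hy
  have hnorm : ‖-(t * (y - x))‖ < 1 := by
    rw [norm_neg]
    calc ‖t * (y - x)‖ ≤ ‖t‖ * ‖y - x‖ := norm_mul_le _ _
      _ < (‖t‖ + 1) * (‖t‖ + 1)⁻¹ := by
          apply mul_lt_mul' (by linarith) hy (norm_nonneg _) (by positivity)
      _ = 1 := by
          rw [mul_inv_cancel₀]; positivity
  set v : Aˣ := Units.oneSub _ hnorm with hv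
  have hvval : (v : A) = t * y := by
    rw [hv, Units.val_oneSub, sub_neg_eq_add, mul_sub, ht]
    abel
  exact ⟨(↑v⁻¹ : A) * t, by rw [mul_assoc, ← hvval]; simp⟩

lemma my_maxIdeal_closed (I : Ideal A) (hI : IsCoatom I) : IsClosed (I : Set A) := by
  have hdisj : ∀ x ∈ (I : Set A), ¬ ∃ t : A, t * x = 1 := by
    rintro x hx ⟨t, ht⟩
    exact hI.1 (eq_top_iff.2 (by
      intro z _
      have h1 : (1 : A) ∈ I := ht ▸ I.smul_mem t hx
      simpa using I.smul_mem z h1))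
  have hsub : (I : Set A) ⊆ {x : A | ∃ t : A, t * x = 1}ᶜ := fun x hx => hdisj x hx
  have hclos : (I.topologicalClosure : Set A) ⊆ {x : A | ∃ t : A, t * x = 1}ᶜ := by
    have : closure (I : Set A) ⊆ {x : A | ∃ t : A, t * x = 1}ᶜ :=
      closure_minimal hsub (isClosed_compl_iff.2 my_leftInv_open)
    simpa [Submodule.topologicalClosure_coe] using this
  have hne : I.topologicalClosure ≠ ⊤ := by
    intro htop
    have h1 : (1 : A) ∈ (I.topologicalClosure : Set A) := htop ▸ trivial
    exact hclos h1 ⟨1, by simp⟩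
  have : I.topologicalClosure = I := by
    by_contra hne2
    have hlt : I < I.topologicalClosure :=
      lt_of_le_of_ne I.le_topologicalClosure (fun hh => hne2 hh.symm)
    exact hne (hI.2 _ hlt)
  have : IsClosed (closure (I : Set A)) := isClosed_closure
  have heq : closure (I : Set A) = (I : Set A) := by
    conv_rhs => rw [← ‹I.topologicalClosure = I›]
    simp [Submodule.topologicalClosure_coe]
  rwa [heq] at this

section QuotPart
variable (I : Ideal A) [IsClosed (I : Set A)]

/-- The action on (the class of) a fixed element, as a continuous linear map. -/
noncomputable def actCLM (a₀ : A) : A →L[ℂ] (A ⧸ I) := by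
  refine LinearMap.mkContinuous
    { toFun := fun t => t • (Submodule.Quotient.mk a₀ : A ⧸ I)
      map_add' := fun s t => add_smul s t _
      map_smul' := fun μ t => by
        simp [IsScalarTower.smul_assoc] }
    ‖a₀‖ ?_
  intro t
  calc ‖t • (Submodule.Quotient.mk a₀ : A ⧸ I)‖
      = ‖(Submodule.Quotient.mk (t • a₀) : A ⧸ I)‖ := by
        rw [Submodule.Quotient.mk_smul]
    _ ≤ ‖t • a₀‖ := Submodule.Quotient.norm_mk_le _ _
    _ = ‖t * a₀‖ := by rw [smul_eq_mul]
    _ ≤ ‖t‖ * ‖a₀‖ := norm_mul_le _ _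
    _ = ‖a₀‖ * ‖t‖ := mul_comm _ _

@[simp] lemma actCLM_apply (a₀ : A) (t : A) :
    actCLM I a₀ t = t • (Submodule.Quotient.mk a₀ : A ⧸ I) := rfl

lemma pow_smul_eq_zero {c : A} {m : A ⧸ I} (h : c • (c • m) = 0) :
    ∀ n, 2 ≤ n → (c ^ n) • m = 0 := by
  intro n hn
  obtain ⟨k, rfl⟩ : ∃ k, n = k + 2 := ⟨n - 2, by omega⟩
  rw [pow_add, pow_two, mul_smul, mul_smul, h, smul_zero]

lemma exp_smul_eq {c : A} {m : A ⧸ I} (h : c • (c • m) = 0) :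
    (exp c) • m = m + c • m := by
  obtain ⟨a₀, rfl⟩ := Submodule.Quotient.mk_surjective I m
  set m := (Submodule.Quotient.mk a₀ : A ⧸ I)
  have hsum : HasSum (fun n : ℕ => ((n.factorial : ℂ))⁻¹ • c ^ n) (exp c) := by
    rw [exp_eq_tsum ℂ]
    exact (expSeries_summable' (𝕂 := ℂ) c).hasSum
  have hmap := hsum.map (actCLM I a₀) (actCLM I a₀).continuous
  have hfun : (fun n : ℕ => actCLM I a₀ (((n.factorial : ℂ))⁻¹ • c ^ n))
      = fun n : ℕ => ((n.factorial : ℂ))⁻¹ • ((c ^ n) • m) := by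
    funext n; simp [m]
  simp only [Function.comp_def] at hmap
  rw [hfun] at hmap
  have hvanish : ∀ n ∉ ({0, 1} : Finset ℕ),
      ((n.factorial : ℂ))⁻¹ • ((c ^ n) • m) = 0 := by
    intro n hn
    simp only [Finset.mem_insert, Finset.mem_singleton] at hn
    rw [pow_smul_eq_zero I h n (by omega), smul_zero]
  have hfin : HasSum (fun n : ℕ => ((n.factorial : ℂ))⁻¹ • ((c ^ n) • m))
      (∑ n ∈ ({0, 1} : Finset ℕ), ((n.factorial : ℂ))⁻¹ • ((c ^ n) • m)) :=
    hasSum_sum_of_ne_finset_zero hvanish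
  have hkey := hmap.unique hfin
  have h2 : actCLM I a₀ (exp c) = (exp c) • m := rfl
  rw [h2] at hkey
  rw [hkey]
  norm_num

/-- scalar multiplication as an A-linear endomorphism -/
noncomputable def muSmul (μ : ℂ) : (A ⧸ I) →ₗ[A] (A ⧸ I) where
  toFun m := μ • m
  map_add' := smul_add μ
  map_smul' a m := smul_comm μ a m

lemma endo_scalar (hI : IsCoatom I) (Φ : (A ⧸ I) →ₗ[A] (A ⧸ I)) :
    ∃ μ : ℂ, ∀ m, Φ m = μ • m := by
  haveI hsimp : IsSimpleModule A (A ⧸ I) := isSimpleModule_iff_isCoatom.mpr hI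
  haveI hnt : Nontrivial (A ⧸ I) := Submodule.Quotient.nontrivial_iff.mpr hI.1
  obtain ⟨b₀, hb₀⟩ := Submodule.Quotient.mk_surjective I (Φ (Submodule.Quotient.mk 1))
  have hΦ : ∀ t : A, Φ (Submodule.Quotient.mk t) = Submodule.Quotient.mk (t * b₀) := by
    intro t
    have h1 : (Submodule.Quotient.mk t : A ⧸ I) = t • Submodule.Quotient.mk 1 := by
      rw [← Submodule.Quotient.mk_smul]; simp
    rw [h1, map_smul, ← hb₀, ← Submodule.Quotient.mk_smul]
    simp
  -- continuity
  have hbound : ∀ m : A ⧸ I, ‖Φ m‖ ≤ ‖b₀‖ * ‖m‖ := by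
    intro m
    refine le_of_forall_pos_le_add ?_
    intro ε hε
    have hδ : 0 < ε / (‖b₀‖ + 1) := by positivity
    obtain ⟨t, rfl, hlt⟩ := Submodule.Quotient.norm_mk_lt m hδ
    rw [hΦ t]
    calc ‖(Submodule.Quotient.mk (t * b₀) : A ⧸ I)‖ ≤ ‖t * b₀‖ :=
          Submodule.Quotient.norm_mk_le _ _
      _ ≤ ‖t‖ * ‖b₀‖ := norm_mul_le _ _
      _ ≤ (‖(Submodule.Quotient.mk t : A ⧸ I)‖ + ε / (‖b₀‖ + 1)) * ‖b₀‖ := by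
          apply mul_le_mul_of_nonneg_right hlt.le (norm_nonneg _)
      _ ≤ ‖b₀‖ * ‖(Submodule.Quotient.mk t : A ⧸ I)‖ + ε := by
          have h1 : ε / (‖b₀‖ + 1) * ‖b₀‖ ≤ ε := by
            rw [div_mul_eq_mul_div, div_le_iff₀ (by positivity)]
            nlinarith [norm_nonneg b₀, hε.le]
          nlinarith [norm_nonneg (Submodule.Quotient.mk t : A ⧸ I), norm_nonneg b₀]
  set Φ' : (A ⧸ I) →L[ℂ] (A ⧸ I) :=
    LinearMap.mkContinuous (Φ.restrictScalars ℂ) ‖b₀‖ hbound with hΦ'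
  have hΦ'app : ∀ m, Φ' m = Φ m := fun m => rfl
  haveI : Nontrivial ((A ⧸ I) →L[ℂ] (A ⧸ I)) := by
    obtain ⟨m, hm⟩ := exists_ne (0 : A ⧸ I)
    refine ⟨1, 0, fun h => hm ?_⟩
    have := congrFun (congrArg DFunLike.coe h) m
    simpa using this
  obtain ⟨μ, hμ⟩ := spectrum.nonempty Φ'
  refine ⟨μ, ?_⟩
  set Θ : (A ⧸ I) →ₗ[A] (A ⧸ I) := Φ - muSmul I μ with hΘ
  have hΘapp : ∀ m, Θ m = Φ m - μ • m := fun m => rfl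
  rcases eq_bot_or_eq_top (LinearMap.ker Θ) with hker | hker
  · -- ker = ⊥ : derive contradiction
    exfalso
    rcases eq_bot_or_eq_top (LinearMap.range Θ) with hrange | hrange
    · -- range = ⊥ means Θ = 0, so ker = ⊤ ≠ ⊥
      obtain ⟨m, hm⟩ := exists_ne (0 : A ⧸ I)
      apply hm
      have h0 : Θ m = 0 := by
        have : Θ m ∈ LinearMap.range Θ := ⟨m, rfl⟩
        rwa [hrange, Submodule.mem_bot] at this
      have : m ∈ LinearMap.ker Θ := h0
      rwa [hker, Submodule.mem_bot] at this
    · -- bijective : μ ∉ spectrum, contradiction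
      rw [spectrum.mem_iff] at hμ
      apply hμ
      set T : (A ⧸ I) →L[ℂ] (A ⧸ I) := algebraMap ℂ _ μ - Φ' with hT
      have hTapp : ∀ m, T m = -(Θ m) := by
        intro m
        have halg : (algebraMap ℂ ((A ⧸ I) →L[ℂ] (A ⧸ I)) μ) m = μ • m := by
          rw [Algebra.algebraMap_eq_smul_one]
          simp
        rw [hT, ContinuousLinearMap.sub_apply, halg, hΘapp, hΦ'app]
        abel
      have hker' : T.ker = ⊥ := by
        rw [eq_bot_iff]
        intro m hm
        have h0 : T m = 0 := hm
        rw [hTapp, neg_eq_zero] at h0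
        have : m ∈ LinearMap.ker Θ := h0
        rwa [hker, Submodule.mem_bot] at this
      have hrange' : T.range = ⊤ := by
        rw [eq_top_iff]
        intro m _
        have : -m ∈ LinearMap.range Θ := by rw [hrange]; trivial
        obtain ⟨n, hn⟩ := this
        exact ⟨n, by rw [ContinuousLinearMap.coe_coe, hTapp, hn, neg_neg]⟩
      set e := ContinuousLinearEquiv.ofBijective T hker' hrange' with he
      have hecoe : ∀ m, e m = T m := fun m => rfl
      refine ⟨⟨T, e.symm.toContinuousLinearMap, ?_, ?_⟩, rfl⟩
      · ext m
        simp only [ContinuousLinearMap.mul_apply, ContinuousLinearMap.one_apply,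
          ContinuousLinearEquiv.coe_coe]
        rw [← hecoe, e.apply_symm_apply]
      · ext m
        simp only [ContinuousLinearMap.mul_apply, ContinuousLinearMap.one_apply,
          ContinuousLinearEquiv.coe_coe]
        rw [← hecoe, e.symm_apply_apply]
  · intro m
    have : m ∈ LinearMap.ker Θ := by rw [hker]; trivial
    have h0 : Θ m = 0 := this
    rw [hΘapp] at h0
    exact sub_eq_zero.mp h0

lemma density (hI : IsCoatom I) (ξ ζ e : A ⧸ I) (hind : ∀ μ : ℂ, ξ ≠ μ • ζ) :
    ∃ c : A, c • ζ = 0 ∧ c • ξ = e := by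
  haveI hsimp : IsSimpleModule A (A ⧸ I) := isSimpleModule_iff_isCoatom.mpr hI
  set L : Submodule A A :=
    { carrier := {c : A | c • ζ = 0}
      add_mem' := fun {c} {d} hc hd => by
        simp only [Set.mem_setOf_eq] at *
        rw [add_smul, hc, hd, add_zero]
      zero_mem' := by simp
      smul_mem' := fun a c hc => by
        simp only [Set.mem_setOf_eq] at *
        rw [smul_eq_mul, mul_smul, hc, smul_zero] } with hL
  have hmemL : ∀ c : A, c ∈ L ↔ c • ζ = 0 := fun c => Iff.rfl
  set f : A →ₗ[A] (A ⧸ I) :=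
    { toFun := fun c => c • ξ
      map_add' := fun c d => add_smul c d ξ
      map_smul' := fun a c => by simp [mul_smul] } with hf
  set T : Submodule A (A ⧸ I) := Submodule.map f L with hT
  rcases eq_bot_or_eq_top T with hTbot | hTtop
  · -- T = ⊥ : contradiction with independence
    exfalso
    by_cases hζ : ζ = 0
    · have h1L : (1 : A) ∈ L := by rw [hmemL, hζ, smul_zero]
      have : f 1 ∈ T := Submodule.mem_map_of_mem h1L
      rw [hTbot, Submodule.mem_bot] at this
      have hξ : ξ = 0 := by simpa [hf] using this
      exact hind 0 (by rw [hξ, hζ, smul_zero])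
    · -- ζ ≠ 0, build endomorphism
      set g : A →ₗ[A] (A ⧸ I) :=
        { toFun := fun c => c • ζ
          map_add' := fun c d => add_smul c d ζ
          map_smul' := fun a c => by simp [mul_smul] } with hg
      have hgsur : Function.Surjective g := by
        rw [← LinearMap.range_eq_top]
        rcases eq_bot_or_eq_top (LinearMap.range g) with hr | hr
        · exfalso
          apply hζ
          have : g 1 ∈ LinearMap.range g := ⟨1, rfl⟩
          rw [hr, Submodule.mem_bot] at this
          simpa [hg] using this
        · exact hr
      have hKL : LinearMap.ker g ≤ LinearMap.ker f := by
        intro c hc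
        have hcL : c ∈ L := by
          rw [hmemL]
          exact hc
        have : f c ∈ T := Submodule.mem_map_of_mem hcL
        rw [hTbot, Submodule.mem_bot] at this
        exact this
      set E := g.quotKerEquivOfSurjective hgsur with hE
      set Φ : (A ⧸ I) →ₗ[A] (A ⧸ I) :=
        ((LinearMap.ker g).liftQ f hKL).comp E.symm.toLinearMap with hΦ
      have hEmk : ∀ c : A, E (Submodule.Quotient.mk c) = g c := fun c => rfl
      have hΦval : ∀ c : A, Φ (g c) = f c := by
        intro c
        have h1 : E.symm (g c) = Submodule.Quotient.mk c := by
          rw [LinearEquiv.symm_apply_eq, hEmk]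
        simp only [hΦ, LinearMap.comp_apply, LinearEquiv.coe_toLinearMap, h1]
        exact Submodule.liftQ_apply _ _ _
      obtain ⟨μ, hμ⟩ := endo_scalar I hI Φ
      have : ξ = μ • ζ := by
        have h1 : Φ (g 1) = f 1 := hΦval 1
        have h2 : g 1 = ζ := by simp [hg]
        have h3 : f 1 = ξ := by simp [hf]
        rw [h2, h3] at h1
        rw [← h1, hμ]
      exact hind μ this
  · -- T = ⊤ : done
    have : e ∈ T := by rw [hTtop]; trivial
    obtain ⟨c, hcL, hce⟩ := this
    exact ⟨c, (hmemL c).mp hcL, hce⟩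

end QuotPart

lemma u_eigen (u : A) (hu : ∀ z : A, spectralRadius ℂ (u * z) ≤ spectralRadius ℂ z)
    (I : Ideal A) [IsClosed (I : Set A)] (hI : IsCoatom I) (ξ : A ⧸ I) :
    ∃ μ : ℂ, u • ξ = μ • ξ := by
  by_contra hcon
  push_neg at hcon
  set α : ℂ := 2 * Complex.I with hα
  set β : ℂ := Complex.I / 2 with hβ
  have hI2 : Complex.I * Complex.I = -1 := Complex.I_mul_I
  have hαβ : β * α = -1 := by
    rw [hα, hβ]
    field_simp
    linear_combination hI2
  have hβ0 : β ≠ 0 := by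
    rw [hβ]
    simp [Complex.I_ne_zero]
  have hnegβinv : -β⁻¹ = α := by
    have h := hαβ
    field_simp at h ⊢
    linear_combination -h
  have hαβinv : α * β⁻¹ = 4 := by
    rw [hα, hβ]
    field_simp
    ring
  -- independence facts
  have hind21 : ∀ μ : ℂ, u • ξ ≠ μ • ξ := hcon
  have hξ0 : ξ ≠ 0 := by
    intro h0
    apply hcon 0
    rw [h0, smul_zero, smul_zero]
  have hind12 : ∀ μ : ℂ, ξ ≠ μ • (u • ξ) := by
    intro μ h
    by_cases hμ : μ = 0
    · rw [hμ, zero_smul] at h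
      exact hξ0 h
    · have hkey : μ⁻¹ • ξ = u • ξ := by
        conv_lhs => rw [h]
        rw [smul_smul, inv_mul_cancel₀ hμ, one_smul]
      exact hcon μ⁻¹ hkey.symm
  -- transvections
  obtain ⟨c₁, hc₁0, hc₁⟩ := density I hI (u • ξ) ξ (α • ξ) hind21
  obtain ⟨c₂, hc₂0, hc₂⟩ := density I hI ξ (u • ξ) (β • (u • ξ)) hind12
  obtain ⟨c₃, hc₃0, hc₃⟩ := density I hI (u • ξ) ξ ((-β⁻¹) • ξ) hind21
  set s₁ := exp c₁ with hs₁
  set s₂ := exp c₂ with hs₂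
  set s₃ := exp c₃ with hs₃
  have hs₁e1 : s₁ • ξ = ξ := by
    rw [hs₁, exp_smul_eq I (by rw [hc₁0, smul_zero]), hc₁0, add_zero]
  have hs₁e2 : s₁ • (u • ξ) = u • ξ + α • ξ := by
    rw [hs₁, exp_smul_eq I (by rw [hc₁, smul_comm, hc₁0, smul_zero]), hc₁]
  have hs₂e2 : s₂ • (u • ξ) = u • ξ := by
    rw [hs₂, exp_smul_eq I (by rw [hc₂0, smul_zero]), hc₂0, add_zero]
  have hs₂e1 : s₂ • ξ = ξ + β • (u • ξ) := by
    rw [hs₂, exp_smul_eq I (by rw [hc₂, smul_comm, hc₂0, smul_zero]), hc₂]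
  have hs₃e1 : s₃ • ξ = ξ := by
    rw [hs₃, exp_smul_eq I (by rw [hc₃0, smul_zero]), hc₃0, add_zero]
  have hs₃e2 : s₃ • (u • ξ) = u • ξ + (-β⁻¹) • ξ := by
    rw [hs₃, exp_smul_eq I (by rw [hc₃, smul_comm, hc₃0, smul_zero]), hc₃]
  set S₁ : Aˣ := (isUnit_exp_of_mem_ball (x := c₁) ((expSeries_radius_eq_top ℂ A).symm ▸ edist_lt_top _ _)).unit with hS₁
  set S₂ : Aˣ := (isUnit_exp_of_mem_ball (x := c₂) ((expSeries_radius_eq_top ℂ A).symm ▸ edist_lt_top _ _)).unit with hS₂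
  set S₃ : Aˣ := (isUnit_exp_of_mem_ball (x := c₃) ((expSeries_radius_eq_top ℂ A).symm ▸ edist_lt_top _ _)).unit with hS₃
  set S : Aˣ := S₁ * S₂ * S₃ with hS
  have hSval : (S : A) = s₁ * s₂ * s₃ := by
    rw [hS]
    simp only [Units.val_mul, hS₁, hS₂, hS₃, IsUnit.unit_spec]
    rfl
  have hSe1 : (S : A) • ξ = β • (u • ξ) := by
    rw [hSval, mul_smul, mul_smul, hs₃e1, hs₂e1, smul_add, hs₁e1,
      smul_comm (s₁ : A) β, hs₁e2, smul_add, smul_smul β α, hαβ, neg_one_smul]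
    abel
  have hSe2 : (S : A) • (u • ξ) = α • ξ := by
    have hb : (-β⁻¹) * β = -1 := by
      field_simp
    have step2 : s₂ • (u • ξ + (-β⁻¹) • ξ) = (-β⁻¹) • ξ := by
      rw [smul_add, hs₂e2, smul_comm (s₂ : A) (-β⁻¹), hs₂e1, smul_add,
        smul_smul (-β⁻¹) β, hb, neg_one_smul]
      abel
    have step1 : s₁ • ((-β⁻¹) • ξ) = α • ξ := by
      rw [smul_comm (s₁ : A) (-β⁻¹), hs₁e1, hnegβinv]
    rw [hSval, mul_smul, mul_smul, hs₃e2, step2, step1]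
  have hSinve2 : ((↑S⁻¹ : A)) • (u • ξ) = β⁻¹ • ξ := by
    have h1 : (↑S⁻¹ : A) • ((S : A) • ξ) = ξ := by
      rw [← mul_smul, Units.inv_mul, one_smul]
    rw [hSe1, smul_comm (↑S⁻¹ : A) β] at h1
    calc (↑S⁻¹ : A) • (u • ξ) = β⁻¹ • (β • ((↑S⁻¹ : A) • (u • ξ))) := by
          rw [smul_smul β⁻¹ β, inv_mul_cancel₀ hβ0, one_smul]
      _ = β⁻¹ • ξ := by rw [h1]
  set w : A := ↑S⁻¹ * u * ↑S * u with hw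
  have hw4 : w • ξ = (4 : ℂ) • ξ := by
    have : w • ξ = (↑S⁻¹ : A) • (u • ((S : A) • (u • ξ))) := by
      rw [hw, mul_smul, mul_smul, mul_smul]
    rw [this, hSe2, smul_comm u α, smul_comm (↑S⁻¹ : A) α, hSinve2,
      smul_smul, hαβinv]
  -- spectral radius bound
  have hru : spectralRadius ℂ u ≤ 1 := by
    have h1 := hu 1
    rw [mul_one] at h1
    exact le_trans h1 my_spectralRadius_one_le
  have hrw : spectralRadius ℂ w ≤ 1 := by
    have hform : w = (↑S⁻¹ : A) * (u * ((S : A) * u * (↑S⁻¹ : A))) * (S : A) := by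
      rw [hw]
      simp [mul_assoc]
    have h1 : spectralRadius ℂ w = spectralRadius ℂ (u * ((S : A) * u * (↑S⁻¹ : A))) := by
      rw [hform, my_spectralRadius_conj]
    have h2 : spectralRadius ℂ ((S : A) * u * (↑S⁻¹ : A)) = spectralRadius ℂ u := by
      have := my_spectralRadius_conj S⁻¹ u
      simpa using this
    calc spectralRadius ℂ w = spectralRadius ℂ (u * ((S : A) * u * (↑S⁻¹ : A))) := h1
      _ ≤ spectralRadius ℂ ((S : A) * u * (↑S⁻¹ : A)) := hu _
      _ = spectralRadius ℂ u := h2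
      _ ≤ 1 := hru
  -- 4 is in the spectrum of w
  have hmem : (4 : ℂ) ∈ spectrum ℂ w := by
    rw [spectrum.mem_iff]
    intro hun
    have h0 : (algebraMap ℂ A 4 - w) • ξ = 0 := by
      rw [sub_smul, hw4, algebraMap_smul, sub_self]
    obtain ⟨V, hV⟩ := hun
    apply hξ0
    calc ξ = ((↑V⁻¹ : A) * ↑V) • ξ := by rw [Units.inv_mul, one_smul]
      _ = (↑V⁻¹ : A) • ((↑V : A) • ξ) := mul_smul _ _ _
      _ = 0 := by rw [hV, h0, smul_zero]
  have h4 : (‖(4 : ℂ)‖₊ : ℝ≥0∞) ≤ 1 := le_trans (my_le_spectralRadius hmem) hrw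
  have h4' : (‖(4 : ℂ)‖₊ : ℝ≥0∞) = 4 := by
    have h : ‖(4 : ℂ)‖₊ = 4 := by
      ext
      push_cast
      simp
    rw [h]
    norm_num
  rw [h4'] at h4
  norm_num at h4

lemma smul_cancel_ne_zero {I : Ideal A} {ν : ℂ} {m : A ⧸ I} (h : ν • m = 0) (hm : m ≠ 0) :
    ν = 0 := by
  by_contra hν
  apply hm
  calc m = ν⁻¹ • (ν • m) := by rw [smul_smul, inv_mul_cancel₀ hν, one_smul]
    _ = 0 := by rw [h, smul_zero]

lemma u_eigen_uniform (u : A) (hu : ∀ z : A, spectralRadius ℂ (u * z) ≤ spectralRadius ℂ z)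
    (I : Ideal A) [IsClosed (I : Set A)] (hI : IsCoatom I) :
    ∃ μ : ℂ, ∀ ξ : A ⧸ I, u • ξ = μ • ξ := by
  haveI hnt : Nontrivial (A ⧸ I) := Submodule.Quotient.nontrivial_iff.mpr hI.1
  obtain ⟨ξ₀, hξ₀⟩ := exists_ne (0 : A ⧸ I)
  obtain ⟨μ₀, hμ₀⟩ := u_eigen u hu I hI ξ₀
  refine ⟨μ₀, fun ζ => ?_⟩
  by_cases hdep : ∃ ν : ℂ, ζ = ν • ξ₀
  · obtain ⟨ν, rfl⟩ := hdep
    rw [smul_comm u ν, hμ₀, smul_smul, smul_smul, mul_comm μ₀ ν]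
  · push_neg at hdep
    have hζ0 : ζ ≠ 0 := fun h => hdep 0 (by rw [h, zero_smul])
    obtain ⟨μζ, hμζ⟩ := u_eigen u hu I hI ζ
    obtain ⟨μ', hμ'⟩ := u_eigen u hu I hI (ξ₀ + ζ)
    have hexpand : (μ₀ - μ') • ξ₀ = (μ' - μζ) • ζ := by
      have h1 : u • (ξ₀ + ζ) = μ₀ • ξ₀ + μζ • ζ := by
        rw [smul_add, hμ₀, hμζ]
      rw [hμ', smul_add] at h1
      rw [sub_smul, sub_smul, sub_eq_sub_iff_add_eq_add, ← h1]
      abel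
    have hμ'eq : μ' = μ₀ := by
      by_contra hne
      have hne' : μ₀ - μ' ≠ 0 := sub_ne_zero.mpr (fun h => hne h.symm)
      have hκ : ξ₀ = ((μ₀ - μ')⁻¹ * (μ' - μζ)) • ζ := by
        rw [mul_smul, ← hexpand, smul_smul, inv_mul_cancel₀ hne', one_smul]
      set κ := (μ₀ - μ')⁻¹ * (μ' - μζ) with hκdef
      have hκ0 : κ ≠ 0 := by
        intro h0
        rw [h0, zero_smul] at hκ
        exact hξ₀ hκ
      apply hdep κ⁻¹
      rw [hκ, smul_smul, inv_mul_cancel₀ hκ0, one_smul]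
    have hζeq : μζ = μ₀ := by
      rw [hμ'eq] at hexpand
      rw [sub_self, zero_smul] at hexpand
      exact (sub_eq_zero.mp (smul_cancel_ne_zero hexpand.symm hζ0)).symm
    rw [hμζ, hζeq]

lemma my_unit_swap {c z : A} (h : IsUnit (1 - z * c)) : IsUnit (1 - c * z) := by
  set v : A := ↑h.unit⁻¹ with hv
  have hv1 : (1 - z * c) * v = 1 := h.mul_val_inv
  have hv2 : v * (1 - z * c) = 1 := h.val_inv_mul
  have e1 : v - z * c * v = 1 := by
    have := hv1
    rwa [sub_mul, one_mul] at this
  have e2 : v - v * z * c = 1 := by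
    have := hv2
    rwa [mul_sub, mul_one, ← mul_assoc] at this
  have key1 : v - 1 - z * c * v = 0 := by
    rw [← e1]
    abel
  have key2 : v - 1 - v * z * c = 0 := by
    rw [← e2]
    abel
  have expand1 : (1 - c * z) * (1 + c * v * z) = 1 + c * (v - 1 - z * c * v) * z := by
    noncomm_ring
  have expand2 : (1 + c * v * z) * (1 - c * z) = 1 + c * (v - 1 - v * z * c) * z := by
    noncomm_ring
  refine ⟨⟨1 - c * z, 1 + c * v * z, ?_, ?_⟩, rfl⟩
  · rw [expand1, key1]
    simp
  · rw [expand2, key2]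
    simp

lemma my_central (hss : ∀ a : A, (∀ x : A, spectrum ℂ (a * x) = {0}) → a = 0)
    (u : A) (hu : ∀ z : A, spectralRadius ℂ (u * z) ≤ spectralRadius ℂ z) :
    ∀ x : A, u * x = x * u := by
  haveI hntA : Nontrivial A := ⟨1, 0, fun h => by
    have h1 : ‖(1 : A)‖ = 1 := norm_one
    rw [h, norm_zero] at h1
    norm_num at h1⟩
  intro x
  set c := u * x - x * u with hc
  -- c lies in every maximal left ideal
  have hcI : ∀ (I : Ideal A), IsCoatom I → c ∈ I := by
    intro I hI
    haveI := my_maxIdeal_closed I hI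
    obtain ⟨μ, hμ⟩ := u_eigen_uniform u hu I hI
    have hmk : c • (Submodule.Quotient.mk (1 : A) : A ⧸ I) = 0 := by
      set m : A ⧸ I := Submodule.Quotient.mk (1 : A) with hm
      have h1 : c • m = u • (x • m) - x • (u • m) := by
        rw [hc, sub_smul, mul_smul, mul_smul]
      rw [h1, hμ (x • m), hμ m, smul_comm x μ, sub_self]
    have hmkc : (Submodule.Quotient.mk c : A ⧸ I) = 0 := by
      have h2 : c • (Submodule.Quotient.mk (1 : A) : A ⧸ I)
          = (Submodule.Quotient.mk c : A ⧸ I) := by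
        rw [← Submodule.Quotient.mk_smul]
        congr 1
        rw [smul_eq_mul, mul_one]
      rwa [h2] at hmk
    exact (Submodule.Quotient.mk_eq_zero I).mp hmkc
  -- left invertibility of 1 - z*c
  have hleft : ∀ z : A, ∃ t : A, t * (1 - z * c) = 1 := by
    intro z
    by_cases h1 : (1 : A) ∈ Submodule.span A ({1 - z * c} : Set A)
    · obtain ⟨t, ht⟩ := Submodule.mem_span_singleton.mp h1
      exact ⟨t, by rwa [smul_eq_mul] at ht⟩
    · exfalso
      have hJ : Submodule.span A ({1 - z * c} : Set A) ≠ ⊤ := fun h => h1 (h ▸ trivial)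
      obtain ⟨I, hImax, hle⟩ := Ideal.exists_le_maximal _ hJ
      have hIco : IsCoatom I := Ideal.isMaximal_def.mp hImax
      have hzc : z * c ∈ I := by
        have hmem := hcI I hIco
        have := I.smul_mem z hmem
        rwa [smul_eq_mul] at this
      have h1zc : 1 - z * c ∈ I := hle (Submodule.mem_span_singleton_self _)
      have hone : (1 : A) ∈ I := by
        have := I.add_mem h1zc hzc
        simpa using this
      exact hIco.1 ((Ideal.eq_top_iff_one I).mpr hone)
  -- full invertibility
  have hunit : ∀ z : A, IsUnit (1 - z * c) := by
    intro z
    obtain ⟨t, ht⟩ := hleft z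
    have htform : t = 1 - -(t * z) * c := by
      have h0 : t - t * (z * c) = 1 := by
        rw [← ht]
        noncomm_ring
      have h2 : t = 1 + t * (z * c) := eq_add_of_sub_eq h0
      calc t = 1 + t * (z * c) := h2
        _ = 1 - -(t * z) * c := by noncomm_ring
    obtain ⟨t', ht'⟩ := hleft (-(t * z))
    rw [← htform] at ht'
    have h1zc : 1 - z * c = t' := by
      calc 1 - z * c = (t' * t) * (1 - z * c) := by rw [ht', one_mul]
        _ = t' * (t * (1 - z * c)) := by rw [mul_assoc]
        _ = t' := by rw [ht, mul_one]
    exact ⟨⟨1 - z * c, t, by rw [h1zc, ht'], ht⟩, rfl⟩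
  -- spectrum of c * z is {0}
  have hspec : ∀ z : A, spectrum ℂ (c * z) = {0} := by
    intro z
    have hsub : spectrum ℂ (c * z) ⊆ {0} := by
      intro μ hμ
      simp only [Set.mem_singleton_iff]
      by_contra hμ0
      rw [spectrum.mem_iff] at hμ
      apply hμ
      have hfac : algebraMap ℂ A μ - c * z
          = algebraMap ℂ A μ * (1 - c * (algebraMap ℂ A μ⁻¹ * z)) := by
        rw [mul_sub, mul_one]
        congr 1
        symm
        calc algebraMap ℂ A μ * (c * (algebraMap ℂ A μ⁻¹ * z))
            = algebraMap ℂ A μ * (algebraMap ℂ A μ⁻¹ * (c * z)) := by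
              congr 1
              rw [← mul_assoc, ← Algebra.commutes μ⁻¹ c, mul_assoc]
          _ = (algebraMap ℂ A μ * algebraMap ℂ A μ⁻¹) * (c * z) := by rw [← mul_assoc]
          _ = c * z := by rw [← map_mul, mul_inv_cancel₀ hμ0, map_one, one_mul]
      rw [hfac]
      apply IsUnit.mul
      · exact (isUnit_iff_ne_zero.mpr hμ0).map (algebraMap ℂ A)
      · have : IsUnit (1 - (algebraMap ℂ A μ⁻¹ * z) * c) := hunit _
        exact my_unit_swap this
    have hne : (spectrum ℂ (c * z)).Nonempty := spectrum.nonempty _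
    rcases Set.subset_singleton_iff_eq.mp hsub with h | h
    · exact absurd h (Set.nonempty_iff_ne_empty.mp hne)
    · exact h
  have hc0 : c = 0 := hss c hspec
  have := sub_eq_zero.mp (hc.symm ▸ hc0 : u * x - x * u = 0)
  exact this


end SpectralCenterAux

open SpectralCenterAux in
/-- Theorem 3.1: In a semisimple complex unital Banach algebra, if
`r(a x) ≤ r(b x)` for all `x` and `b` is invertible, then `a = u b` for some
central element `u` with `r(u) ≤ 1`. -/
theorem exists_central_of_spectralRadius_le_of_invertible
    {A : Type*} [NormedRing A] [NormedAlgebra ℂ A] [CompleteSpace A] [NormOneClass A]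
    (hss : ∀ a : A, (∀ x : A, spectrum ℂ (a * x) = {0}) → a = 0)
    (a b : A)
    (h : ∀ x : A, spectralRadius ℂ (a * x) ≤ spectralRadius ℂ (b * x))
    (hb : IsUnit b) :
    ∃ u ∈ Set.center A, spectralRadius ℂ u ≤ 1 ∧ a = u * b := by
  obtain ⟨B, hB⟩ := hb
  set u : A := a * ↑B⁻¹ with hu
  have hradu : ∀ z : A, spectralRadius ℂ (u * z) ≤ spectralRadius ℂ z := by
    intro z
    have h1 : u * z = a * ((↑B⁻¹ : A) * z) := by rw [hu, mul_assoc]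
    have h2 : b * ((↑B⁻¹ : A) * z) = z := by
      rw [← hB, ← mul_assoc, B.mul_inv, one_mul]
    calc spectralRadius ℂ (u * z) = spectralRadius ℂ (a * ((↑B⁻¹ : A) * z)) := by rw [h1]
      _ ≤ spectralRadius ℂ (b * ((↑B⁻¹ : A) * z)) := h _
      _ = spectralRadius ℂ z := by rw [h2]
  refine ⟨u, ?_, ?_, ?_⟩
  · rw [Semigroup.mem_center_iff]
    intro g
    exact (my_central hss u hradu g).symm
  · have h1 := hradu 1
    rw [mul_one] at h1
    exact le_trans h1 my_spectralRadius_one_le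
  · rw [hu, mul_assoc, ← hB, B.inv_mul, mul_one]
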